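/- Let F : H → ℝ be differentiable with L-Lipschitz gradient, argmin F ≠ ∅, satisfying PL with parameter μ > 0, and let x solve the heavy ball ODE ẍ + αẋ + ∇F(x) = 0, x(0) = x₀, ẋ(0) = 0. Let a, δ > 0, set R = α + δ - a, and define V(t) = a(F(x(t)) - F*) + ⟨∇F(x(t)), ẋ(t)⟩ + (δ/2)‖ẋ(t)‖². If R > 0, aR ≤ 2μ, and L - αδ + (δ/2)R ≤ 0, then V(t) ≤ a(F(x₀) - F*) e^{-Rt} for all t ≥ 0. -/

import Mathlib

open RealInnerProductSpace


open Set Filter Topology in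
private lemma heavy_ball_aux (V D : ℝ → ℝ) (R C t : ℝ) (hR : 0 < R) (ht : 0 ≤ t)
    (cV : Continuous V) (hV0 : V 0 = C)
    (hDV : ∀ s, D s ≤ -R * V s)
    (key_slope : ∀ s : ℝ, ∀ r, D s < r → ∃ᶠ z in 𝓝[>] s, slope V s z < r) :
    V t ≤ C * Real.exp (-R * t) := by
  have main : ∀ ε > 0, V t ≤ C * Real.exp (-R * t) + ε * Real.exp t := by
    intro ε hε
    have hB : ∀ τ : ℝ, HasDerivAt (fun τ => C * Real.exp (-R * τ) + ε * Real.exp τ)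
        (C * (-R * Real.exp (-R * τ)) + ε * Real.exp τ) τ := by
      intro τ
      have h1 : HasDerivAt (fun τ : ℝ => -R * τ) (-R) τ := by
        simpa using (hasDerivAt_id τ).const_mul (-R)
      have h2 := (Real.hasDerivAt_exp (-R * τ)).comp τ h1
      have h3 := (h2.const_mul C).add ((Real.hasDerivAt_exp τ).const_mul ε)
      exact h3.congr_deriv (by ring)
    have bound : ∀ s ∈ Ico (0 : ℝ) t,
        V s = C * Real.exp (-R * s) + ε * Real.exp s →
        D s < C * (-R * Real.exp (-R * s)) + ε * Real.exp s := by
      intro s _ heq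
      have h1 := hDV s
      rw [heq] at h1
      have h2 : (0 : ℝ) < Real.exp s := Real.exp_pos s
      nlinarith [mul_pos hε h2, mul_pos (mul_pos hR hε) h2]
    have := image_le_of_liminf_slope_right_lt_deriv_boundary (f := V) (f' := D)
      (a := 0) (b := t) cV.continuousOn
      (fun s _ r hr => key_slope s r hr)
      (by rw [hV0]; simp; linarith) hB bound
    exact this (Set.right_mem_Icc.2 ht)
  have final : ∀ ε > 0, V t ≤ C * Real.exp (-R * t) + ε := by
    intro ε hε
    have h1 := main (ε / Real.exp t) (div_pos hε (Real.exp_pos t))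
    rwa [div_mul_cancel₀ _ (Real.exp_ne_zero t)] at h1
  exact le_of_forall_pos_le_add final

open Set Filter Topology in
/-- Lyapunov estimate: under PL and the parameter conditions, the energy
V(t) = a(F(x(t)) - F*) + ⟨∇F(x(t)), ẋ(t)⟩ + (δ/2)‖ẋ(t)‖² decays linearly. -/
theorem heavy_ball_lyapunov_decay {H : Type*} [NormedAddCommGroup H] [InnerProductSpace ℝ H]
    [CompleteSpace H]
    (F : H → ℝ) (F' : H → H) (hdiff : ∀ z, HasGradientAt F (F' z) z)
    (L : ℝ) (hL : 0 < L) (hlip : LipschitzWith (Real.toNNReal L) F')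
    (Fstar : ℝ) (hFstar : ∀ z, Fstar ≤ F z) (hattain : ∃ z, F z = Fstar)
    (μ : ℝ) (hμ : 0 < μ)
    (hpl : ∀ z, F z - Fstar ≤ 1 / (2 * μ) * ‖F' z‖ ^ 2)
    (α : ℝ) (hα : 0 < α)
    (x v w : ℝ → H) (x₀ : H)
    (hx : ∀ t, HasDerivAt x (v t) t) (hv : ∀ t, HasDerivAt v (w t) t)
    (hode : ∀ t, w t + α • v t + F' (x t) = 0)
    (hx0 : x 0 = x₀) (hv0 : v 0 = 0)
    (a δ R : ℝ) (ha : 0 < a) (hδ : 0 < δ) (hRdef : R = α + δ - a)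
    (hR : 0 < R) (hH1 : a * R ≤ 2 * μ) (hH2 : L - α * δ + δ / 2 * R ≤ 0)
    (V : ℝ → ℝ)
    (hV : ∀ t, V t = a * (F (x t) - Fstar) + ⟪F' (x t), v t⟫ + δ / 2 * ‖v t‖ ^ 2) :
    ∀ t, 0 ≤ t → V t ≤ a * (F x₀ - Fstar) * Real.exp (-R * t) := by
  set p : ℝ → H := fun t => F' (x t) with hp
  have hV' : ∀ t, V t = a * (F (x t) - Fstar) + ⟪p t, v t⟫ + δ / 2 * ‖v t‖ ^ 2 := hV
  -- derivative of F ∘ x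
  have hφ : ∀ t, HasDerivAt (fun t => F (x t)) ⟪p t, v t⟫ t := fun t => by
    exact (hdiff (x t)).hasFDerivAt.comp_hasDerivAt t (hx t)
  -- derivative of ‖v‖²
  have hn : ∀ t, HasDerivAt (fun t => ‖v t‖ ^ 2) (2 * ⟪w t, v t⟫) t := fun t => by
    have h := (hv t).inner ℝ (hv t)
    have heq : (fun t => ⟪v t, v t⟫) = fun t => ‖v t‖ ^ 2 := by
      ext s; exact real_inner_self_eq_norm_sq _
    rw [heq] at h
    exact h.congr_deriv (by rw [real_inner_comm (v t) (w t)]; ring)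
  -- continuity facts
  have cx : Continuous x := by
    rw [continuous_iff_continuousAt]; exact fun t => (hx t).continuousAt
  have cv : Continuous v := by
    rw [continuous_iff_continuousAt]; exact fun t => (hv t).continuousAt
  have cp : Continuous p := hlip.continuous.comp cx
  have cVfun : V = fun t => a * (F (x t) - Fstar) + ⟪p t, v t⟫ + δ / 2 * ‖v t‖ ^ 2 :=
    funext hV
  have cF : Continuous fun t => F (x t) := by
    rw [continuous_iff_continuousAt]; exact fun t => (hφ t).continuousAt
  have cV : Continuous V := by
    rw [cVfun]
    exact ((continuous_const.mul (cF.sub continuous_const)).add (cp.inner cv)).add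
      (continuous_const.mul (cv.norm.pow 2))
  -- the upper derivative bound
  set D : ℝ → ℝ := fun s =>
    a * ⟪p s, v s⟫ + (L * (‖v s‖ * ‖v s‖) + ⟪p s, w s⟫) + δ / 2 * (2 * ⟪w s, v s⟫) with hD
  -- pointwise estimate D s ≤ -R V s
  have hDV : ∀ s, D s ≤ -R * V s := by
    intro s
    have hw : w s = -(α • v s) - p s := by
      have h0 := hode s
      rw [hp]
      abel_nf
      abel_nf at h0
      linear_combination (norm := module) h0
    have h1 : ⟪p s, w s⟫ = -α * ⟪p s, v s⟫ - ‖p s‖ ^ 2 := by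
      rw [hw]
      simp [inner_sub_right, inner_neg_right, real_inner_smul_right,
        real_inner_self_eq_norm_sq]
    have h2 : ⟪w s, v s⟫ = -α * ‖v s‖ ^ 2 - ⟪p s, v s⟫ := by
      rw [hw]
      simp [inner_sub_left, inner_neg_left, real_inner_smul_left,
        real_inner_self_eq_norm_sq]
    have hpl' := hpl (x s)
    have hfs := hFstar (x s)
    have hv2 : (0 : ℝ) ≤ ‖v s‖ ^ 2 := sq_nonneg _
    have key : R * a * (F (x s) - Fstar) ≤ ‖p s‖ ^ 2 := by
      have hRa : (0 : ℝ) ≤ R * a := (mul_pos hR ha).le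
      have h3 : R * a * (F (x s) - Fstar) ≤ R * a * (1 / (2 * μ) * ‖p s‖ ^ 2) :=
        mul_le_mul_of_nonneg_left hpl' hRa
      have h4 : R * a * (1 / (2 * μ) * ‖p s‖ ^ 2) ≤ ‖p s‖ ^ 2 := by
        rw [div_mul_eq_mul_div, one_mul, mul_div_assoc']
        rw [div_le_iff₀ (by positivity)]
        have := mul_le_mul_of_nonneg_right hH1 (sq_nonneg ‖p s‖)
        nlinarith
      exact h3.trans h4
    have key2 : (L - α * δ + δ / 2 * R) * ‖v s‖ ^ 2 ≤ 0 :=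
      mul_nonpos_of_nonpos_of_nonneg hH2 hv2
    have hDs : D s = a * ⟪p s, v s⟫ + (L * (‖v s‖ * ‖v s‖) + ⟪p s, w s⟫) +
        δ / 2 * (2 * ⟪w s, v s⟫) := rfl
    rw [hDs, h1, h2, hV' s]
    show _ ≤ -R * (a * (F (x s) - Fstar) + ⟪p s, v s⟫ + δ / 2 * ‖v s‖ ^ 2)
    rw [hRdef] at key key2 ⊢
    nlinarith [key, key2]
  -- slope estimate: liminf of right slope of V is ≤ D
  have key_slope : ∀ s : ℝ, ∀ r, D s < r → ∃ᶠ z in 𝓝[>] s, slope V s z < r := by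
    intro s r hr
    set A : ℝ → ℝ := fun z =>
      a * slope (fun t => F (x t)) s z +
        (L * (‖slope x s z‖ * ‖v z‖) + ⟪p s, slope v s z⟫) +
        δ / 2 * slope (fun t => ‖v t‖ ^ 2) s z with hA
    have hmono : 𝓝[>] s ≤ 𝓝[≠] s :=
      nhdsWithin_mono _ fun z hz => Set.mem_compl_singleton_iff.2 (LT.lt.ne' hz)
    have t1 : Tendsto (slope (fun t => F (x t)) s) (𝓝[>] s) (𝓝 ⟪p s, v s⟫) :=
      (hasDerivAt_iff_tendsto_slope.1 (hφ s)).mono_left hmono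
    have t2 : Tendsto (fun z => ‖slope x s z‖) (𝓝[>] s) (𝓝 ‖v s‖) :=
      ((hasDerivAt_iff_tendsto_slope.1 (hx s)).mono_left hmono).norm
    have t3 : Tendsto (fun z => ‖v z‖) (𝓝[>] s) (𝓝 ‖v s‖) :=
      (cv.norm.tendsto s).mono_left nhdsWithin_le_nhds
    have t4 : Tendsto (fun z => ⟪p s, slope v s z⟫) (𝓝[>] s) (𝓝 ⟪p s, w s⟫) :=
      tendsto_const_nhds.inner ((hasDerivAt_iff_tendsto_slope.1 (hv s)).mono_left hmono)
    have t5 : Tendsto (slope (fun t => ‖v t‖ ^ 2) s) (𝓝[>] s) (𝓝 (2 * ⟪w s, v s⟫)) :=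
      (hasDerivAt_iff_tendsto_slope.1 (hn s)).mono_left hmono
    have tA : Tendsto A (𝓝[>] s) (𝓝 (D s)) := by
      rw [hD]
      exact ((t1.const_mul a).add (((t2.mul t3).const_mul L).add t4)).add
        (t5.const_mul (δ / 2))
    have hineq : ∀ᶠ z in 𝓝[>] s, slope V s z ≤ A z := by
      filter_upwards [self_mem_nhdsWithin] with z hz
      have hd : 0 < z - s := sub_pos.2 hz
      have hne : z - s ≠ 0 := ne_of_gt hd
      rw [slope_def_field, div_le_iff₀ hd]
      have hlip' : ‖p z - p s‖ ≤ L * ‖x z - x s‖ := by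
        have := hlip.dist_le_mul (x z) (x s)
        simpa [dist_eq_norm, Real.coe_toNNReal L hL.le] using this
      have hin : ⟪p z - p s, v z⟫ ≤ L * ‖x z - x s‖ * ‖v z‖ :=
        (real_inner_le_norm _ _).trans (mul_le_mul_of_nonneg_right hlip' (norm_nonneg _))
      have hsplit : ⟪p z, v z⟫ - ⟪p s, v s⟫ = ⟪p z - p s, v z⟫ + ⟪p s, v z - v s⟫ := by
        simp [inner_sub_left, inner_sub_right]
      have hAz : A z * (z - s) =
          a * (F (x z) - F (x s)) +
            (L * (‖x z - x s‖ * ‖v z‖) + ⟪p s, v z - v s⟫) +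
            δ / 2 * (‖v z‖ ^ 2 - ‖v s‖ ^ 2) := by
        have hx' : ‖slope x s z‖ = ‖x z - x s‖ / (z - s) := by
          rw [slope, norm_smul, vsub_eq_sub]
          simp [abs_of_pos hd, norm_inv, Real.norm_eq_abs]
          rw [div_eq_inv_mul]
        have hv' : ⟪p s, slope v s z⟫ = ⟪p s, v z - v s⟫ / (z - s) := by
          rw [slope, vsub_eq_sub, real_inner_smul_right]
          ring
        have hArfl : A z = a * slope (fun t => F (x t)) s z +
            (L * (‖slope x s z‖ * ‖v z‖) + ⟪p s, slope v s z⟫) +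
            δ / 2 * slope (fun t => ‖v t‖ ^ 2) s z := rfl
        rw [hArfl, slope_def_field, slope_def_field, hx', hv']
        field_simp
      rw [hAz, hV' z, hV' s]
      linarith [hin, hsplit]
    have h1 : ∀ᶠ z in 𝓝[>] s, A z < r := tA.eventually_lt_const hr
    exact ((h1.and hineq).mono fun z hz => lt_of_le_of_lt hz.2 hz.1).frequently
  -- conclusion via the fencing theorem
  intro t ht
  have hV0 : V 0 = a * (F x₀ - Fstar) := by
    rw [hV' 0, hv0]; simp [hx0]
  exact heavy_ball_aux V D R (a * (F x₀ - Fstar)) t hR ht cV hV0 hDV key_slope
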